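/- Leibniz rule for divided differences: if u = v · w for functions v, w : D → ℂ and z_0, ..., z_n are distinct points of D ⊆ ℂ, then u[z_0, ..., z_n] = Σ_{k=0}^n v[z_0, ..., z_k] · w[z_k, ..., z_n]. -/

import Mathlib

/-- Divided difference of a complex function at points `a 0, ..., a n`. -/
noncomputable def divDiffC (f : ℂ → ℂ) : ℕ → (ℕ → ℂ) → ℂ
  | 0, a => f (a 0)
  | (n+1), a => (divDiffC f n (fun i => a (i+1)) - divDiffC f n a) / (a (n+1) - a 0)

lemma divDiffC_mul' (f : ℂ → ℂ) (m : ℕ) (a : ℕ → ℂ) (c d : ℂ)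
    (hc : a (m+1) = c) (hd : a 0 = d) (h : c ≠ d) :
    divDiffC f (m+1) a * (c - d) =
      divDiffC f m (fun i => a (i+1)) - divDiffC f m a := by
  subst hc hd
  rw [divDiffC]
  exact div_mul_cancel₀ _ (sub_ne_zero.mpr h)

/-- **Leibniz rule** for divided differences of a product. -/
theorem divDiff_leibniz (n : ℕ) (v w : ℂ → ℂ) (z : ℕ → ℂ)
    (hdist : ∀ i j, i ≤ n → j ≤ n → i ≠ j → z i ≠ z j) :
    divDiffC (fun x => v x * w x) n z =
      ∑ k ∈ Finset.range (n + 1),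
        divDiffC v k z * divDiffC w (n - k) (fun i => z (i + k)) := by
  induction n generalizing z with
  | zero => simp [divDiffC]
  | succ n IH =>
    have h10 : z (n+1) ≠ z 0 := hdist (n+1) 0 le_rfl (by omega) (by omega)
    rw [divDiffC,
        IH (fun i => z (i+1)) (fun i j hi hj hij =>
          hdist (i+1) (j+1) (by omega) (by omega) (by omega)),
        IH z (fun i j hi hj hij => hdist i j (by omega) (by omega) hij),
        div_eq_iff (sub_ne_zero.mpr h10)]
    have hR : (∑ k ∈ Finset.range (n+1+1),
          divDiffC v k z * divDiffC w (n+1-k) (fun i => z (i+k))) * (z (n+1) - z 0)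
        = ∑ k ∈ Finset.range (n+1),
            (divDiffC v k z *
              (divDiffC w (n-k) (fun i => z (i+1+k)) - divDiffC w (n-k) (fun i => z (i+k)))
            + (divDiffC v k (fun i => z (i+1)) - divDiffC v k z) *
              divDiffC w (n-k) (fun i => z (i+k+1))) := by
      rw [Finset.sum_mul]
      have split : ∀ k ∈ Finset.range (n+1+1),
          divDiffC v k z * divDiffC w (n+1-k) (fun i => z (i+k)) * (z (n+1) - z 0)
          = divDiffC v k z * (divDiffC w (n+1-k) (fun i => z (i+k)) * (z (n+1) - z k))
            + divDiffC v k z * (z k - z 0) * divDiffC w (n+1-k) (fun i => z (i+k)) := by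
        intro k _; ring
      rw [Finset.sum_congr rfl split, Finset.sum_add_distrib]
      conv_lhs =>
        congr
        · rw [Finset.sum_range_succ]
        · rw [Finset.sum_range_succ']
      simp only [sub_self, mul_zero, zero_mul, add_zero, zero_sub, neg_zero]
      rw [← Finset.sum_add_distrib]
      refine Finset.sum_congr rfl ?_
      intro k hk
      have hk' : k ≤ n := Finset.mem_range_succ_iff.mp hk
      have h1 : n + 1 - k = (n - k) + 1 := by omega
      have h2 : n + 1 - (k + 1) = n - k := by omega
      rw [h1, h2,
          divDiffC_mul' w (n-k) (fun i => z (i+k)) (z (n+1)) (z k)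
            (by show z (n-k+1+k) = z (n+1); congr 1; omega)
            (by show z (0+k) = z k; congr 1; omega)
            (hdist (n+1) k le_rfl (by omega) (by omega)),
          divDiffC_mul' v k z (z (k+1)) (z 0) rfl rfl
            (hdist (k+1) 0 (by omega) (by omega) (by omega))]
      have e1 : (fun i => z (i+1+k)) = (fun i => z (i+k+1)) := by
        funext i; congr 1; omega
      rw [e1]
      rfl
    rw [hR, ← Finset.sum_sub_distrib]
    refine (Finset.sum_congr rfl ?_).symm
    intro k hk
    have e1 : (fun i => z (i+1+k)) = (fun i => z (i+k+1)) := by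
      funext i; congr 1; omega
    rw [e1]
    ring
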